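/- In the inadvertent-setting Markov chain of token holdings under the threshold-k strategy, posting transitions are reversible: if state s' is obtained from s by the poster i giving one token to agent j (where j has fewer than k + 1/b tokens in s), then the transition probability from s to s' equals the transition probability from s' to s, both equal to 1/(n·m) where m is the number of agents other than the payer with fewer than k + 1/b tokens. -/
import Mathlib


open Finset

/-- Transition kernel of the posting move: a poster `i` is chosen uniformly among the
`n` agents; if `i` has at least one token, a recipient `j` is chosen uniformly among
the agents other than `i` holding fewer than `maxT = k + 1/b` tokens, and one token
moves from `i` to `j`. -/
def postKernel (n : ℕ) (maxT : ℚ) (s s' : Fin n → ℚ) : ℚ :=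
  ∑ i : Fin n, ∑ j : Fin n,
    if i ≠ j ∧ 1 ≤ s i ∧ s j < maxT ∧
        s' = Function.update (Function.update s i (s i - 1)) j (s j + 1) then
      (1 / (n : ℚ)) *
        (1 / ((univ.filter (fun l : Fin n => l ≠ i ∧ s l < maxT)).card : ℚ))
    else 0

lemma upd_val {n : ℕ} (s : Fin n → ℚ) (i j : Fin n) (hij : i ≠ j) (x : Fin n) :
    Function.update (Function.update s i (s i - 1)) j (s j + 1) x
      = if x = j then s j + 1 else if x = i then s i - 1 else s x := by
  rcases eq_or_ne x j with rfl | hxj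
  · simp
  · rcases eq_or_ne x i with rfl | hxi
    · simp [Function.update_of_ne hij, hij]
    · simp [Function.update_of_ne hxj, Function.update_of_ne hxi, hxj, hxi]

lemma unique_pair {n : ℕ} (M : ℚ) (s s' : Fin n → ℚ) (i j : Fin n) (hij : i ≠ j)
    (hs' : s' = Function.update (Function.update s i (s i - 1)) j (s j + 1))
    (i' j' : Fin n)
    (h : i' ≠ j' ∧ 1 ≤ s i' ∧ s j' < M ∧
      s' = Function.update (Function.update s i' (s i' - 1)) j' (s j' + 1)) :
    i' = i ∧ j' = j := by
  obtain ⟨hij', -, -, hrep⟩ := h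
  have A : ∀ x, s' x = if x = j then s j + 1 else if x = i then s i - 1 else s x := by
    intro x; rw [hs']; exact upd_val s i j hij x
  have B : ∀ x, s' x = if x = j' then s j' + 1 else if x = i' then s i' - 1 else s x := by
    intro x; rw [hrep]; exact upd_val s i' j' hij' x
  have hii : i' = i := by
    by_contra hii
    have hA := A i'
    have hB := B i'
    rw [if_neg hij', if_pos rfl] at hB
    rcases eq_or_ne i' j with rfl | hji
    · rw [if_pos rfl] at hA; linarith [hA.symm.trans hB]
    · rw [if_neg hji, if_neg hii] at hA; linarith [hA.symm.trans hB]
  subst hii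
  refine ⟨rfl, ?_⟩
  by_contra hjj
  have hA := A j'
  have hB := B j'
  rw [if_pos rfl] at hB
  rw [if_neg hjj, if_neg hij'.symm] at hA
  linarith [hA.symm.trans hB]

lemma postKernel_eval {n : ℕ} (M : ℚ) (s s' : Fin n → ℚ) (i j : Fin n) (hij : i ≠ j)
    (hi : 1 ≤ s i) (hj : s j < M)
    (hs' : s' = Function.update (Function.update s i (s i - 1)) j (s j + 1)) :
    postKernel n M s s' = (1 / (n : ℚ)) *
      (1 / ((univ.filter (fun l : Fin n => l ≠ i ∧ s l < M)).card : ℚ)) := by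
  set v : ℚ := (1 / (n : ℚ)) *
      (1 / ((univ.filter (fun l : Fin n => l ≠ i ∧ s l < M)).card : ℚ)) with hv
  unfold postKernel
  have step : ∀ i' j' : Fin n,
      (if i' ≠ j' ∧ 1 ≤ s i' ∧ s j' < M ∧
          s' = Function.update (Function.update s i' (s i' - 1)) j' (s j' + 1) then
        (1 / (n : ℚ)) *
          (1 / ((univ.filter (fun l : Fin n => l ≠ i' ∧ s l < M)).card : ℚ))
      else 0) = if i' = i ∧ j' = j then v else 0 := by
    intro i' j'
    by_cases hc : i' ≠ j' ∧ 1 ≤ s i' ∧ s j' < M ∧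
        s' = Function.update (Function.update s i' (s i' - 1)) j' (s j' + 1)
    · obtain ⟨rfl, rfl⟩ := unique_pair M s s' i j hij hs' i' j' hc
      rw [if_pos hc, if_pos ⟨rfl, rfl⟩]
    · have h2 : ¬ (i' = i ∧ j' = j) := by
        rintro ⟨rfl, rfl⟩; exact hc ⟨hij, hi, hj, hs'⟩
      rw [if_neg hc, if_neg h2]
  simp only [step]
  have inner : ∀ i' : Fin n,
      (∑ j' : Fin n, if i' = i ∧ j' = j then v else 0) = if i' = i then v else 0 := by
    intro i'
    by_cases h : i' = i
    · subst h; simp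
    · simp [h]
  simp only [inner]
  simp


/-- Posting transitions are reversible: if `s'` is obtained from `s` by the poster `i`
giving one token to `j` (with `j` holding fewer than `k + 1/b` tokens in `s`), then
`P(s,s') = P(s',s) = 1/(n·m)`, where `m` is the number of agents other than the payer
holding fewer than `k + 1/b` tokens. -/
theorem post_transition_reversible (n : ℕ) (hn : 2 ≤ n) (k b : ℚ) (hk : 1 ≤ k)
    (hb0 : 0 < b) (hb1 : b ≤ 1) (s : Fin n → ℚ)
    (hbound : ∀ l, 0 ≤ s l ∧ s l ≤ k + 1 / b) (i j : Fin n) (hij : i ≠ j)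
    (hi : 1 ≤ s i) (hj : s j < k + 1 / b)
    (s' : Fin n → ℚ)
    (hs' : s' = Function.update (Function.update s i (s i - 1)) j (s j + 1))
    (m : ℕ)
    (hm : m = (Finset.univ.filter (fun l : Fin n => l ≠ i ∧ s l < k + 1 / b)).card) :
    postKernel n (k + 1 / b) s s' = 1 / ((n : ℚ) * m) ∧
    postKernel n (k + 1 / b) s' s = 1 / ((n : ℚ) * m) := by
  set M : ℚ := k + 1 / b with hM
  have hval : ∀ x, s' x = if x = j then s j + 1 else if x = i then s i - 1 else s x := by
    intro x; rw [hs']; exact upd_val s i j hij x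
  have hs'j : s' j = s j + 1 := by rw [hval]; simp
  have hs'i : s' i = s i - 1 := by rw [hval]; simp [hij]
  have hs'other : ∀ x, x ≠ i → x ≠ j → s' x = s x := by
    intro x h1 h2; rw [hval]; simp [h1, h2]
  -- reverse representation
  have hrev : s = Function.update (Function.update s' j (s' j - 1)) i (s' i + 1) := by
    funext x
    rw [upd_val s' j i hij.symm]
    rcases eq_or_ne x i with rfl | hxi
    · rw [if_pos rfl, hs'i]; ring
    · rw [if_neg hxi]
      rcases eq_or_ne x j with rfl | hxj
      · rw [if_pos rfl, hs'j]; ring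
      · rw [if_neg hxj, hs'other x hxi hxj]
  have h1 : 1 ≤ s' j := by rw [hs'j]; linarith [(hbound j).1]
  have h2 : s' i < M := by rw [hs'i]; linarith [(hbound i).2]
  -- card equality
  have hcard : (univ.filter (fun l : Fin n => l ≠ j ∧ s' l < M)).card
      = (univ.filter (fun l : Fin n => l ≠ i ∧ s l < M)).card := by
    have hset : (univ.filter (fun l : Fin n => l ≠ j ∧ s' l < M))
        = insert i ((univ.filter (fun l : Fin n => l ≠ i ∧ s l < M)).erase j) := by
      ext x
      simp only [mem_insert, mem_erase, mem_filter, mem_univ, true_and]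
      constructor
      · rintro ⟨hxj, hx⟩
        rcases eq_or_ne x i with rfl | hxi
        · exact Or.inl rfl
        · right
          exact ⟨hxj, hxi, by rwa [hs'other x hxi hxj] at hx⟩
      · rintro (rfl | ⟨hxj, hxi, hx⟩)
        · exact ⟨hij, h2⟩
        · exact ⟨hxj, by rwa [hs'other x hxi hxj]⟩
    rw [hset, card_insert_of_notMem (by simp), card_erase_of_mem (by simp [hij.symm, hj])]
    have hjmem : j ∈ univ.filter (fun l : Fin n => l ≠ i ∧ s l < M) := by
      simp [hij.symm, hj]
    have : 1 ≤ (univ.filter (fun l : Fin n => l ≠ i ∧ s l < M)).card :=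
      card_pos.mpr ⟨j, hjmem⟩
    omega
  have e1 := postKernel_eval M s s' i j hij hi hj hs'
  have e2 := postKernel_eval M s' s j i hij.symm h1 h2 hrev
  rw [hcard] at e2
  have : (1 / (n : ℚ)) *
      (1 / ((univ.filter (fun l : Fin n => l ≠ i ∧ s l < M)).card : ℚ))
      = 1 / ((n : ℚ) * m) := by
    rw [hm, div_mul_div_comm, one_mul]
  exact ⟨e1.trans this, e2.trans this⟩
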